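/- Let M be a metric space with base point 0 and let μ ∈ S_{F(M)} be a Δ-point of the Banach space F(M). Then for every ε > 0 and every slice S of B_{F(M)} with μ ∈ S there exists a sequence of molecules (m_{u_iv_i})_{i∈ℕ} contained in S such that ‖m_{u_iv_i} − m_{u_jv_j}‖ ≥ 2 − ε for all i, j ∈ ℕ with i ≠ j. -/

import Mathlib

set_option maxHeartbeats 2000000

open Metric Set Filter NNReal

noncomputable section

/-- The topological dual of a seminormed space (the old Mathlib `NormedSpace.Dual`). -/
abbrev NormedSpace.Dual (𝕜 : Type*) [NontriviallyNormedField 𝕜] (E : Type*)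
    [SeminormedAddCommGroup E] [NormedSpace 𝕜 E] : Type _ := E →L[𝕜] 𝕜

namespace DeltaPaper

/-! ### Generic Banach space notions -/

variable {X : Type*} [NormedAddCommGroup X] [NormedSpace ℝ X]

/-- `x` is a Daugavet-point: every slice of the unit ball contains, for every `ε > 0`,
an element at distance at least `2 - ε` from `x`. -/
def IsDaugavetPoint (x : X) : Prop :=
  ∀ (φ : NormedSpace.Dual ℝ X) (α : ℝ), ‖φ‖ = 1 → 0 < α → ∀ ε > 0,
    ∃ y : X, ‖y‖ ≤ 1 ∧ 1 - α < φ y ∧ 2 - ε ≤ ‖x - y‖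

/-- `x` is a Δ-point: every slice of the unit ball containing `x` contains, for every
`ε > 0`, an element at distance at least `2 - ε` from `x`. -/
def IsDeltaPoint (x : X) : Prop :=
  ∀ (φ : NormedSpace.Dual ℝ X) (α : ℝ), ‖φ‖ = 1 → 0 < α → 1 - α < φ x → ∀ ε > 0,
    ∃ y : X, ‖y‖ ≤ 1 ∧ 1 - α < φ y ∧ 2 - ε ≤ ‖x - y‖

/-- `x*` is a w*-Daugavet-point of the dual of `X`. -/
def IsWeakStarDaugavetPoint (f : NormedSpace.Dual ℝ X) : Prop :=
  ∀ (x : X) (α : ℝ), ‖x‖ = 1 → 0 < α → ∀ ε > 0,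
    ∃ g : NormedSpace.Dual ℝ X, ‖g‖ ≤ 1 ∧ 1 - α < g x ∧ 2 - ε ≤ ‖f - g‖

/-- `x*` is a w*-Δ-point of the dual of `X`. -/
def IsWeakStarDeltaPoint (f : NormedSpace.Dual ℝ X) : Prop :=
  ∀ (x : X) (α : ℝ), ‖x‖ = 1 → 0 < α → 1 - α < f x → ∀ ε > 0,
    ∃ g : NormedSpace.Dual ℝ X, ‖g‖ ≤ 1 ∧ 1 - α < g x ∧ 2 - ε ≤ ‖f - g‖

/-- `x` is a denting point of the unit ball: it lies in slices of the unit ball of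
arbitrarily small diameter. -/
def IsDentingPoint (x : X) : Prop :=
  ‖x‖ ≤ 1 ∧ ∀ ε > 0, ∃ (φ : NormedSpace.Dual ℝ X) (α : ℝ), ‖φ‖ = 1 ∧ 0 < α ∧
    1 - α < φ x ∧ Metric.diam {y : X | ‖y‖ ≤ 1 ∧ 1 - α < φ y} < ε

/-- The Kuratowski measure of non-compactness of a set: the infimum of all `ε > 0`
such that the set can be covered by finitely many sets of diameter less than `ε`. -/
def kuratowski {Y : Type*} [PseudoMetricSpace Y] (A : Set Y) : ℝ :=
  sInf {ε : ℝ | 0 < ε ∧ ∃ 𝒞 : Finset (Set Y), (A ⊆ ⋃ B ∈ 𝒞, B) ∧ ∀ B ∈ 𝒞, Metric.diam B < ε}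

/-! ### The space of Lipschitz functions vanishing at a base point -/

variable {M : Type*} [PseudoMetricSpace M]

/-- The least Lipschitz constant of a function. -/
def lipConst (f : M → ℝ) : ℝ≥0 := sInf {K | LipschitzWith K f}

theorem lipschitzWith_lipConst {f : M → ℝ} (hf : ∃ K, LipschitzWith K f) :
    LipschitzWith (lipConst f) f := by
  obtain ⟨K₀, hK₀⟩ := hf
  rw [lipschitzWith_iff_dist_le_mul]
  intro x y
  rcases le_or_gt (dist x y) 0 with h | h
  · have h0 : dist x y = 0 := le_antisymm h dist_nonneg
    have := hK₀.dist_le_mul x y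
    rw [h0, mul_zero] at this ⊢
    exact this
  · rw [← div_le_iff₀ h]
    have hnn : 0 ≤ dist (f x) (f y) / dist x y := by positivity
    rw [← Real.coe_toNNReal _ hnn, NNReal.coe_le_coe]
    refine le_csInf ⟨K₀, hK₀⟩ ?_
    intro K hK
    rw [← NNReal.coe_le_coe, Real.coe_toNNReal _ hnn, div_le_iff₀ h]
    exact hK.dist_le_mul x y

theorem lipConst_le {f : M → ℝ} {K : ℝ≥0} (hK : LipschitzWith K f) : lipConst f ≤ K :=
  csInf_le (OrderBot.bddBelow _) hK

theorem lipschitzWith_smul {f : M → ℝ} {K : ℝ≥0} (hK : LipschitzWith K f) (c : ℝ) :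
    LipschitzWith (‖c‖₊ * K) (c • f) := by
  rw [lipschitzWith_iff_dist_le_mul] at *
  intro x y
  have : dist ((c • f) x) ((c • f) y) = ‖c‖ * dist (f x) (f y) := by
    simp only [Pi.smul_apply, smul_eq_mul, Real.dist_eq, ← mul_sub, abs_mul, Real.norm_eq_abs]
  rw [this, NNReal.coe_mul, coe_nnnorm, mul_assoc]
  exact mul_le_mul_of_nonneg_left (hK x y) (norm_nonneg c)

variable (M) in
/-- The submodule of `M → ℝ` consisting of Lipschitz functions vanishing at the
base point `z`. -/
def Lip0 (z : M) : Submodule ℝ (M → ℝ) where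
  carrier := {f | (∃ K, LipschitzWith K f) ∧ f z = 0}
  add_mem' := by
    rintro f g ⟨⟨K, hK⟩, hf0⟩ ⟨⟨L, hL⟩, hg0⟩
    exact ⟨⟨K + L, hK.add hL⟩, by simp [hf0, hg0]⟩
  zero_mem' := ⟨⟨0, LipschitzWith.const' 0⟩, rfl⟩
  smul_mem' := by
    rintro c f ⟨⟨K, hK⟩, hf0⟩
    exact ⟨⟨‖c‖₊ * K, lipschitzWith_smul hK c⟩, by simp [hf0]⟩

variable {z : M}

instance : NormedAddCommGroup ↥(Lip0 M z) :=
  AddGroupNorm.toNormedAddCommGroup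
    { toFun := fun f => ((lipConst (f : M → ℝ) : ℝ≥0) : ℝ)
      map_zero' := by
        have h0 : lipConst (0 : M → ℝ) = 0 :=
          le_antisymm (lipConst_le (by simpa using LipschitzWith.const' (0 : ℝ))) bot_le
        show ((lipConst ((0 : ↥(Lip0 M z)) : M → ℝ) : ℝ≥0) : ℝ) = 0
        rw [show ((0 : ↥(Lip0 M z)) : M → ℝ) = 0 from rfl, h0, NNReal.coe_zero]
      add_le' := by
        intro f g
        have hf := lipschitzWith_lipConst f.2.1
        have hg := lipschitzWith_lipConst g.2.1
        have : lipConst ((f + g : ↥(Lip0 M z)) : M → ℝ) ≤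
            lipConst (f : M → ℝ) + lipConst (g : M → ℝ) := by
          refine lipConst_le ?_
          have := hf.add hg
          convert this using 1
          all_goals rfl
        exact_mod_cast this
      neg' := by
        intro f
        show ((lipConst ((-f : ↥(Lip0 M z)) : M → ℝ) : ℝ≥0) : ℝ) = _
        rw [show ((-f : ↥(Lip0 M z)) : M → ℝ) = -(f : M → ℝ) from rfl]
        unfold lipConst
        congr 2
        ext K
        exact ⟨fun hK => by simpa using hK.neg, fun hK => hK.neg⟩
      eq_zero_of_map_eq_zero' := by
        intro f hf
        replace hf : ((lipConst (f : M → ℝ) : ℝ≥0) : ℝ) = 0 := hf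
        have h0 : lipConst (f : M → ℝ) = 0 := by exact_mod_cast hf
        have hl : LipschitzWith 0 (f : M → ℝ) := h0 ▸ lipschitzWith_lipConst f.2.1
        ext x
        have := hl.dist_le_mul x z
        simp only [NNReal.coe_zero, zero_mul] at this
        have hxz : (f : M → ℝ) x = (f : M → ℝ) z :=
          dist_le_zero.mp this
        simpa [f.2.2] using hxz }

theorem Lip0.norm_def (f : ↥(Lip0 M z)) : ‖f‖ = ((lipConst (f : M → ℝ) : ℝ≥0) : ℝ) := rfl

theorem Lip0.lipschitzWith (f : ↥(Lip0 M z)) : LipschitzWith (lipConst (f : M → ℝ)) (f : M → ℝ) :=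
  lipschitzWith_lipConst f.2.1

instance : NormedSpace ℝ ↥(Lip0 M z) where
  norm_smul_le c f := by
    have : lipConst ((c • f : ↥(Lip0 M z)) : M → ℝ) ≤ ‖c‖₊ * lipConst (f : M → ℝ) :=
      lipConst_le (lipschitzWith_smul (Lip0.lipschitzWith f) c)
    calc ‖c • f‖ = ((lipConst ((c • f : ↥(Lip0 M z)) : M → ℝ) : ℝ≥0) : ℝ) := rfl
      _ ≤ ((‖c‖₊ * lipConst (f : M → ℝ) : ℝ≥0) : ℝ) := by exact_mod_cast this
      _ = ‖c‖ * ‖f‖ := by push_cast [Lip0.norm_def]; rfl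

variable (M z) in
/-- The evaluation functional `δ_x ∈ Lip₀(M)*`. -/
def evalδ (x : M) : NormedSpace.Dual ℝ ↥(Lip0 M z) :=
  LinearMap.mkContinuous
    ({ toFun := fun f => (f : M → ℝ) x
       map_add' := fun f g => rfl
       map_smul' := fun c f => rfl } : ↥(Lip0 M z) →ₗ[ℝ] ℝ)
    (dist x z)
    (by
      intro f
      have := (Lip0.lipschitzWith f).dist_le_mul x z
      simp only [f.2.2, Real.dist_eq, sub_zero] at this
      calc ‖(f : M → ℝ) x‖ = |(f : M → ℝ) x - 0| := by simp
        _ ≤ (lipConst (f : M → ℝ) : ℝ) * dist x z := by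
            simpa [f.2.2, Real.dist_eq] using (Lip0.lipschitzWith f).dist_le_mul x z
        _ = dist x z * ‖f‖ := by rw [Lip0.norm_def, mul_comm])

variable (M z) in
/-- The Lipschitz-free space over `M`: the closed linear span of the evaluation
functionals inside `Lip₀(M)*`. -/
def FreeSpace : Submodule ℝ (NormedSpace.Dual ℝ ↥(Lip0 M z)) :=
  (Submodule.span ℝ (Set.range (evalδ M z))).topologicalClosure

/-- The operator norm on `F(M)*` (found automatically by the older Mathlib). -/
instance : Norm (NormedSpace.Dual ℝ ↥(FreeSpace M z)) := ContinuousLinearMap.hasOpNorm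

variable (M z) in
/-- The molecule `m_{x y} = (δ_x - δ_y)/d(x,y)` as an element of `Lip₀(M)*`. -/
def molecule (x y : M) : NormedSpace.Dual ℝ ↥(Lip0 M z) :=
  (dist x y)⁻¹ • (evalδ M z x - evalδ M z y)

theorem molecule_mem_freeSpace (x y : M) : molecule M z x y ∈ FreeSpace M z :=
  Submodule.le_topologicalClosure _
    (Submodule.smul_mem _ _ (Submodule.sub_mem _
      (Submodule.subset_span ⟨x, rfl⟩) (Submodule.subset_span ⟨y, rfl⟩)))

variable (M z) in
/-- The molecule `m_{x y}` as an element of the free space `F(M)`. -/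
def mol (x y : M) : ↥(FreeSpace M z) := ⟨molecule M z x y, molecule_mem_freeSpace x y⟩

variable (M) in
/-- A metric space is uniformly discrete if distances between distinct points are
bounded below by a positive constant. -/
def UniformlyDiscrete : Prop := ∃ θ > (0:ℝ), ∀ x y : M, x ≠ y → θ ≤ dist x y

/-- A norm-one Lipschitz function is local if its Lipschitz constant is approximated
on pairs of arbitrarily close points. -/
def IsLocal (f : ↥(Lip0 M z)) : Prop :=
  ∀ ε > 0, ∃ u v : M, u ≠ v ∧
    ‖f‖ - ε < ((f : M → ℝ) u - (f : M → ℝ) v) / dist u v ∧ dist u v < ε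

/-- `f ∈ S_{Lip₀(M)}` is a w*-Daugavet-point: for every w*-slice `S(μ, α)` of
`B_{Lip₀(M)}` (`μ` a norm-one element of `F(M)`) and every `ε > 0` there is `g` in the
slice with `‖f - g‖ ≥ 2 - ε`. -/
def IsLipWeakStarDaugavetPoint (f : ↥(Lip0 M z)) : Prop :=
  ∀ μ : NormedSpace.Dual ℝ ↥(Lip0 M z), μ ∈ FreeSpace M z → ‖μ‖ = 1 → ∀ α > (0:ℝ), ∀ ε > (0:ℝ),
    ∃ g : ↥(Lip0 M z), ‖g‖ ≤ 1 ∧ 1 - α < μ g ∧ 2 - ε ≤ ‖f - g‖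

/-- `f ∈ S_{Lip₀(M)}` is a w*-Δ-point: the same as above, but only for w*-slices
containing `f`. -/
def IsLipWeakStarDeltaPoint (f : ↥(Lip0 M z)) : Prop :=
  ∀ μ : NormedSpace.Dual ℝ ↥(Lip0 M z), μ ∈ FreeSpace M z → ‖μ‖ = 1 → ∀ α > (0:ℝ),
    1 - α < μ f → ∀ ε > (0:ℝ),
    ∃ g : ↥(Lip0 M z), ‖g‖ ≤ 1 ∧ 1 - α < μ g ∧ 2 - ε ≤ ‖f - g‖

end DeltaPaper

open DeltaPaper NormedSpace

section Aux

variable {M : Type*} [MetricSpace M] {z : M}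

theorem aux_eval_bound (f : ↥(Lip0 M z)) (x y : M) :
    |(f : M → ℝ) x - (f : M → ℝ) y| ≤ ‖f‖ * dist x y := by
  have h := (Lip0.lipschitzWith f).dist_le_mul x y
  rw [Real.dist_eq] at h
  simpa [Lip0.norm_def] using h

theorem evalδ_apply (x : M) (f : ↥(Lip0 M z)) : evalδ M z x f = (f : M → ℝ) x := rfl

theorem evalδ_sub_norm (x y : M) : ‖evalδ M z x - evalδ M z y‖ ≤ dist x y := by
  refine ContinuousLinearMap.opNorm_le_bound _ dist_nonneg (fun f => ?_)
  have h : (evalδ M z x - evalδ M z y) f = (f : M → ℝ) x - (f : M → ℝ) y := rfl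
  rw [h, Real.norm_eq_abs, mul_comm]
  exact aux_eval_bound f x y

theorem evalδ_base : evalδ M z z = 0 := by
  have h : ‖evalδ M z z‖ ≤ 0 := by
    refine ContinuousLinearMap.opNorm_le_bound _ le_rfl (fun f => ?_)
    have : evalδ M z z f = 0 := f.2.2
    simp [this]
  simpa using norm_le_zero_iff.mp h

theorem evalδ_mem (x : M) : evalδ M z x ∈ FreeSpace M z :=
  Submodule.le_topologicalClosure _ (Submodule.subset_span ⟨x, rfl⟩)

theorem mol_norm_le (x y : M) : ‖mol M z x y‖ ≤ 1 := by
  show ‖molecule M z x y‖ ≤ 1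
  rw [molecule, norm_smul]
  rcases eq_or_ne (dist x y) 0 with h0 | h0
  · simp [h0]
  · have hd : 0 < dist x y := lt_of_le_of_ne dist_nonneg (Ne.symm h0)
    have : |(dist x y)⁻¹| = (dist x y)⁻¹ := abs_of_pos (by positivity)
    rw [Real.norm_eq_abs, this]
    calc (dist x y)⁻¹ * ‖evalδ M z x - evalδ M z y‖ ≤ (dist x y)⁻¹ * dist x y := by
          exact mul_le_mul_of_nonneg_left (evalδ_sub_norm x y) (by positivity)
      _ = 1 := inv_mul_cancel₀ h0

theorem mol_eq (x y : M) :
    mol M z x y = (dist x y)⁻¹ •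
      ((⟨evalδ M z x, evalδ_mem x⟩ : ↥(FreeSpace M z)) - ⟨evalδ M z y, evalδ_mem y⟩) := by
  apply Subtype.ext
  rfl

theorem mol_apply (ψ : Dual ℝ ↥(FreeSpace M z)) (x y : M) :
    ψ (mol M z x y) = (dist x y)⁻¹ *
      (ψ ⟨evalδ M z x, evalδ_mem x⟩ - ψ ⟨evalδ M z y, evalδ_mem y⟩) := by
  rw [mol_eq, map_smul, map_sub]
  rfl

theorem exists_molecule (ψ : Dual ℝ ↥(FreeSpace M z)) {c : ℝ} (hc0 : 0 ≤ c)
    (hc : c < ‖ψ‖) : ∃ u v : M, u ≠ v ∧ c < ψ (mol M z u v) := by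
  by_contra hcon
  push_neg at hcon
  -- the function induced by ψ on M
  set g : M → ℝ := fun x => ψ ⟨evalδ M z x, evalδ_mem x⟩ with hgdef
  have hglip : LipschitzWith c.toNNReal g := by
    rw [lipschitzWith_iff_dist_le_mul]
    intro x y
    rcases eq_or_ne x y with rfl | hxy
    · simp [mul_nonneg hc0 dist_nonneg]
    · have hd : 0 < dist x y := dist_pos.mpr hxy
      have h1 := hcon x y hxy
      have h2 := hcon y x hxy.symm
      rw [mol_apply] at h1 h2
      rw [dist_comm y x] at h2
      have hm1 := mul_le_mul_of_nonneg_right h1 hd.le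
      have hm2 := mul_le_mul_of_nonneg_right h2 hd.le
      have hdinv : (dist x y)⁻¹ * dist x y = 1 := inv_mul_cancel₀ hd.ne'
      rw [Real.dist_eq, Real.coe_toNNReal _ hc0, abs_sub_le_iff]
      simp only [hgdef]
      constructor <;> nlinarith
  have hgz : g z = 0 := by
    have h0 : (⟨evalδ M z z, evalδ_mem z⟩ : ↥(FreeSpace M z)) = 0 :=
      Subtype.ext evalδ_base
    simp only [hgdef, h0, map_zero]
  set G : ↥(Lip0 M z) := ⟨g, ⟨c.toNNReal, hglip⟩, hgz⟩ with hGdef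
  have hGnorm : ‖G‖ ≤ c := by
    rw [Lip0.norm_def]
    have := lipConst_le (f := (G : M → ℝ)) (K := c.toNNReal) hglip
    calc ((lipConst (G : M → ℝ) : ℝ≥0) : ℝ) ≤ ((c.toNNReal : ℝ≥0) : ℝ) := by exact_mod_cast this
      _ = c := Real.coe_toNNReal _ hc0
  -- ψ agrees with evaluation at G on the span of the evaluation functionals
  have hrep : ∀ ν' (hν' : ν' ∈ Submodule.span ℝ (Set.range (evalδ M z)))
      (h : ν' ∈ FreeSpace M z), ψ ⟨ν', h⟩ = ν' G := by
    intro ν' hν'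
    induction hν' using Submodule.span_induction with
    | mem x hx =>
      obtain ⟨x, rfl⟩ := hx
      intro h
      rfl
    | zero =>
      intro h
      have h0 : (⟨(0 : Dual ℝ ↥(Lip0 M z)), h⟩ : ↥(FreeSpace M z)) = 0 := rfl
      simp [h0]
    | add a b ha hb iha ihb =>
      intro h
      have haF : a ∈ FreeSpace M z := Submodule.le_topologicalClosure _ ha
      have hbF : b ∈ FreeSpace M z := Submodule.le_topologicalClosure _ hb
      have hab : (⟨a + b, h⟩ : ↥(FreeSpace M z)) = ⟨a, haF⟩ + ⟨b, hbF⟩ := rfl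
      rw [hab, map_add, iha haF, ihb hbF]
      rfl
    | smul r a ha iha =>
      intro h
      have haF : a ∈ FreeSpace M z := Submodule.le_topologicalClosure _ ha
      have hra : (⟨r • a, h⟩ : ↥(FreeSpace M z)) = r • (⟨a, haF⟩ : ↥(FreeSpace M z)) := rfl
      rw [hra, map_smul, iha haF]
      rfl
  have hψle : ‖ψ‖ ≤ ‖G‖ := by
    refine ContinuousLinearMap.opNorm_le_bound _ (norm_nonneg G) (fun ν => ?_)
    refine le_of_forall_pos_le_add (fun τ hτ => ?_)
    have hden : (0:ℝ) < ‖ψ‖ + ‖G‖ + 1 := by linarith [ContinuousLinearMap.opNorm_nonneg ψ, norm_nonneg G]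
    set τ' : ℝ := τ / (‖ψ‖ + ‖G‖ + 1) with hτ'def
    have hτ' : 0 < τ' := div_pos hτ hden
    set sp : Submodule ℝ (Dual ℝ ↥(Lip0 M z)) := Submodule.span ℝ (Set.range (evalδ M z))
      with hsp
    have hnucl : (ν : Dual ℝ ↥(Lip0 M z)) ∈ closure (sp : Set (Dual ℝ ↥(Lip0 M z))) := by
      have h2 : (ν : Dual ℝ ↥(Lip0 M z)) ∈
          (sp.topologicalClosure : Set (Dual ℝ ↥(Lip0 M z))) := ν.2
      rwa [Submodule.topologicalClosure_coe] at h2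
    obtain ⟨w, hwmem, hwclose⟩ : ∃ w ∈ sp, ‖(ν : Dual ℝ ↥(Lip0 M z)) - w‖ < τ' := by
      rcases Metric.mem_closure_iff.mp hnucl τ' hτ' with ⟨y, hy, hd⟩
      exact ⟨y, hy, by rwa [← dist_eq_norm]⟩
    have hwF : w ∈ FreeSpace M z := Submodule.le_topologicalClosure _ hwmem
    set e : ↥(FreeSpace M z) := ⟨w, hwF⟩ with hedef
    have hsub : ‖ν - e‖ = ‖(ν : Dual ℝ ↥(Lip0 M z)) - w‖ := rfl
    have h1 : ‖ψ (ν - e)‖ ≤ ‖ψ‖ * τ' := by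
      refine le_trans (ψ.le_opNorm _) ?_
      exact mul_le_mul_of_nonneg_left (hsub.trans_le hwclose.le) (ContinuousLinearMap.opNorm_nonneg ψ)
    have h2 : ‖ψ e‖ ≤ (‖ν‖ + τ') * ‖G‖ := by
      rw [show ψ e = w G from hrep w hwmem hwF]
      refine le_trans (w.le_opNorm G) (mul_le_mul_of_nonneg_right ?_ (norm_nonneg G))
      have h3 := norm_sub_le ((ν : Dual ℝ ↥(Lip0 M z))) ((ν : Dual ℝ ↥(Lip0 M z)) - w)
      rw [sub_sub_cancel] at h3
      have h4 : ‖(ν : Dual ℝ ↥(Lip0 M z))‖ = ‖ν‖ := rfl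
      linarith [hwclose]
    have hψν : ψ (ν - e) = ψ ν - ψ e := ContinuousLinearMap.map_sub ψ ν e
    calc ‖ψ ν‖ ≤ ‖ψ (ν - e)‖ + ‖ψ e‖ := by
          rw [hψν]
          simpa [sub_add_cancel] using norm_add_le (ψ ν - ψ e) (ψ e)
      _ ≤ ‖ψ‖ * τ' + (‖ν‖ + τ') * ‖G‖ := add_le_add h1 h2
      _ = ‖G‖ * ‖ν‖ + τ' * (‖ψ‖ + ‖G‖) := by ring
      _ ≤ ‖G‖ * ‖ν‖ + τ := by
          have : τ' * (‖ψ‖ + ‖G‖) ≤ τ := by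
            rw [hτ'def, div_mul_eq_mul_div, div_le_iff₀ hden]
            nlinarith [ContinuousLinearMap.opNorm_nonneg ψ, norm_nonneg G, hτ.le]
          linarith
  linarith [hGnorm, hψle, hc]

end Aux


/-- Course-of-values recursion. -/
noncomputable def covRec {T : Type*} (F : ∀ k : ℕ, (Fin k → T) → T) : ℕ → T := fun k =>
  F k (fun i => covRec F i)
termination_by k => k
decreasing_by exact i.2

theorem covRec_eq {T : Type*} (F : ∀ k : ℕ, (Fin k → T) → T) (k : ℕ) :
    covRec F k = F k (fun i => covRec F i) := by rw [covRec]

/-- Dependent choice along `ℕ` with full history. -/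
theorem seq_exists {T : Type*} [Nonempty T] (Inv : ∀ k : ℕ, (Fin k → T) → T → Prop)
    (hstep : ∀ (g : ℕ → T) (k : ℕ),
      (∀ j, j < k → Inv j (fun i : Fin j => g i) (g j)) →
      ∃ x, Inv k (fun i : Fin k => g i) x) :
    ∃ g : ℕ → T, ∀ k, Inv k (fun i : Fin k => g i) (g k) := by
  classical
  set F : ∀ k : ℕ, (Fin k → T) → T := fun k hist =>
    if h : ∃ x, Inv k hist x then h.choose else Classical.arbitrary T with hF
  refine ⟨covRec F, fun k => ?_⟩
  induction k using Nat.strong_induction_on with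
  | _ k ih =>
    have hex : ∃ x, Inv k (fun i : Fin k => covRec F i) x :=
      hstep (covRec F) k (fun j hj => ih j hj)
    have heq : covRec F k = F k (fun i : Fin k => covRec F i) := covRec_eq F k
    rw [heq]
    show Inv k _ (if h : ∃ x, Inv k (fun i : Fin k => covRec F i) x then h.choose
      else Classical.arbitrary T)
    rw [dif_pos hex]
    exact hex.choose_spec

theorem geom_tail_le (n : ℕ) :
    (∑ i ∈ Finset.range n, ((2:ℝ)^(i+1))⁻¹) ≤ 1 - ((2:ℝ)^n)⁻¹ := by
  induction n with
  | zero => simp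
  | succ n ih =>
    rw [Finset.sum_range_succ]
    have hp : (0:ℝ) < 2^n := by positivity
    have hp1 : (0:ℝ) < 2^(n+1) := by positivity
    have hkey : ((2:ℝ)^(n+1))⁻¹ + ((2:ℝ)^(n+1))⁻¹ = ((2:ℝ)^n)⁻¹ := by
      rw [pow_succ]
      field_simp
      ring
    linarith

theorem one_le_two_pow (n : ℕ) : (1:ℝ) ≤ 2^n := one_le_pow₀ (by norm_num)

section Abstract

variable {X : Type*} [NormedAddCommGroup X] [NormedSpace ℝ X]

/-- The inductive step, abstractly: in a normed space whose unit ball has a norming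
set `Mol` ("molecules"), starting from a Δ-point we can find a new molecule deep in the
given slice, close to being normed by all previously constructed functionals, and a new
norming functional. -/
theorem abstract_step (μ : X) (hμ : ‖μ‖ = 1) (hΔ : IsDeltaPoint μ)
    (Mol : X → Prop)
    (hMol : ∀ (ψ : Dual ℝ X) (c : ℝ), 0 ≤ c → c < ‖ψ‖ → ∃ m, Mol m ∧ ‖m‖ ≤ 1 ∧ c < ψ m)
    (φ : Dual ℝ X) (hφ : ‖φ‖ = 1) (α : ℝ)
    (l ρ η : ℝ) (δ : ℕ → ℝ)
    (hl0 : 0 < l) (hl4 : l ≤ 1/4) (hρ0 : 0 < ρ) (hρ4 : ρ ≤ 1/4)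
    (hρβ : ρ ≤ l * (φ μ - (1 - α)))
    (hφμ_le : φ μ ≤ 1) (hφμ_ge : -1 ≤ φ μ)
    (hη : l * (1 - φ μ) + ρ ≤ η)
    (hδ0 : ∀ k, 0 < δ k) (hδρ : ∀ k, 3 * δ k ≤ ρ/2)
    (hδsum : ∀ k, (∑ i ∈ Finset.range k, δ i) ≤ ρ/3)
    (k : ℕ) (fs : Fin k → Dual ℝ X)
    (hfs1 : ∀ i, ‖fs i‖ = 1) (hfsμ : ∀ i : Fin k, 1 - δ (i:ℕ) ≤ fs i μ) :
    ∃ (f : Dual ℝ X) (m : X), Mol m ∧ ‖f‖ = 1 ∧ 1 - δ k ≤ f μ ∧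
      1 - α < φ m ∧ (∀ i : Fin k, 1 - η ≤ fs i m) ∧ f m ≤ -(1 - η) := by
  have hβ0 : 0 < φ μ - (1 - α) := by nlinarith
  obtain ⟨Ψ, hΨdef⟩ : ∃ Ψ' : Dual ℝ X, Ψ' = l • φ + ∑ i : Fin k, fs i := ⟨_, rfl⟩
  have hΨap : ∀ ξ : X, Ψ ξ = l * φ ξ + ∑ i : Fin k, fs i ξ := by
    intro ξ
    simp only [hΨdef, ContinuousLinearMap.add_apply, ContinuousLinearMap.coe_smul',
      Pi.smul_apply, smul_eq_mul, ContinuousLinearMap.coe_sum', Finset.sum_apply]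
  obtain ⟨Sd, hSd⟩ : ∃ S : ℝ, S = ∑ i ∈ Finset.range k, δ i := ⟨_, rfl⟩
  have hSd0 : 0 ≤ Sd := hSd ▸ Finset.sum_nonneg (fun i _ => (hδ0 i).le)
  have hSdρ : Sd ≤ ρ/3 := hSd ▸ hδsum k
  have hnub : ‖Ψ‖ ≤ l + k := by
    calc ‖Ψ‖ ≤ ‖l • φ‖ + ‖∑ i : Fin k, fs i‖ := by
          rw [hΨdef]; exact norm_add_le _ _
      _ ≤ l * 1 + ∑ i : Fin k, ‖fs i‖ := by
          rw [norm_smul, Real.norm_eq_abs, abs_of_pos hl0, hφ]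
          exact add_le_add le_rfl (norm_sum_le _ _)
      _ = l + k := by simp [hfs1]
  have hΨμ_lb : l * φ μ + ((k:ℝ) - Sd) ≤ Ψ μ := by
    rw [hΨap]
    have h1 : ∑ i : Fin k, (1 - δ (i:ℕ)) ≤ ∑ i : Fin k, fs i μ :=
      Finset.sum_le_sum (fun i _ => hfsμ i)
    have h2 : ∑ i : Fin k, (1 - δ (i:ℕ)) = (k:ℝ) - Sd := by
      rw [hSd, Finset.sum_sub_distrib]
      simp [Fin.sum_univ_eq_sum_range (fun i => δ i) k]
    linarith
  have hΨμ_lb2 : -l - ρ/3 ≤ Ψ μ := by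
    have h4 : l * φ μ ≥ -l := by nlinarith
    have h5 : (0:ℝ) ≤ (k:ℝ) := Nat.cast_nonneg k
    linarith
  have hΨμ_ub : Ψ μ ≤ ‖Ψ‖ := by
    have h := Ψ.le_opNorm μ
    rw [Real.norm_eq_abs, hμ, mul_one] at h
    exact le_trans (le_abs_self _) h
  have hn0 : 0 < ‖Ψ‖ := by
    rcases Nat.eq_zero_or_pos k with hk0 | hkpos
    · subst hk0
      have hΨeq : Ψ = l • φ := by simp [hΨdef]
      rw [hΨeq, norm_smul, Real.norm_eq_abs, abs_of_pos hl0, hφ, mul_one]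
      exact hl0
    · have hk1 : (1:ℝ) ≤ (k:ℝ) := by exact_mod_cast hkpos
      have h4 : l * φ μ ≥ -l := by nlinarith
      have h5 : (0:ℝ) < Ψ μ := by linarith [hΨμ_lb]
      linarith [hΨμ_ub]
  -- the slice given by the normalization of Ψ
  have hγ0 : 0 < 1 - Ψ μ / ‖Ψ‖ + δ k / ‖Ψ‖ := by
    have h1 : Ψ μ / ‖Ψ‖ ≤ 1 := (div_le_one hn0).mpr hΨμ_ub
    have h2 : 0 < δ k / ‖Ψ‖ := div_pos (hδ0 k) hn0
    linarith
  have hΦ1 : ‖(‖Ψ‖⁻¹ • Ψ : Dual ℝ X)‖ = 1 := by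
    rw [norm_smul, Real.norm_eq_abs, abs_of_pos (inv_pos.mpr hn0), inv_mul_cancel₀ hn0.ne']
  have hΦμ : 1 - (1 - Ψ μ / ‖Ψ‖ + δ k / ‖Ψ‖) < (‖Ψ‖⁻¹ • Ψ : Dual ℝ X) μ := by
    have hap : (‖Ψ‖⁻¹ • Ψ : Dual ℝ X) μ = ‖Ψ‖⁻¹ * Ψ μ := rfl
    rw [hap, ← div_eq_inv_mul]
    have h2 : 0 < δ k / ‖Ψ‖ := div_pos (hδ0 k) hn0
    linarith
  obtain ⟨y, hy1, hy2, hy3⟩ := hΔ (‖Ψ‖⁻¹ • Ψ) _ hΦ1 hγ0 hΦμ (δ k) (hδ0 k)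
  have hΨy : Ψ μ - δ k < Ψ y := by
    have hap : (‖Ψ‖⁻¹ • Ψ : Dual ℝ X) y = ‖Ψ‖⁻¹ * Ψ y := rfl
    rw [hap, ← div_eq_inv_mul] at hy2
    have h1 : (Ψ μ - δ k)/‖Ψ‖ < Ψ y / ‖Ψ‖ := by
      rw [_root_.sub_div]
      linarith
    exact (div_lt_div_iff_of_pos_right hn0).mp h1
  -- the norming functional of μ - y
  have hδk1 : δ k ≤ 1/2 := by
    have := hδρ k
    linarith [hρ4]
  have hμy : μ - y ≠ 0 := by
    intro h0
    rw [h0, norm_zero] at hy3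
    linarith
  obtain ⟨f, hf1, hf2⟩ := exists_dual_vector ℝ (μ - y) (norm_ne_zero_iff.mpr hμy)
  have hfy_abs : |f y| ≤ 1 := by
    have h := f.le_opNorm y
    rw [Real.norm_eq_abs, hf1, one_mul] at h
    exact le_trans h hy1
  have hfμ_abs : |f μ| ≤ 1 := by
    have h := f.le_opNorm μ
    rwa [Real.norm_eq_abs, hf1, hμ, one_mul] at h
  have hsplit : f μ - f y = ‖μ - y‖ := by
    have h := hf2
    rw [ContinuousLinearMap.map_sub] at h
    exact h
  have hfμ : 1 - δ k ≤ f μ := by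
    have := neg_le_of_abs_le hfy_abs
    linarith [hy3]
  have hfy : f y ≤ δ k - 1 := by
    have := le_trans (le_abs_self _) hfμ_abs
    linarith [hy3]
  -- the combined functional
  obtain ⟨χ, hχdef⟩ : ∃ χ' : Dual ℝ X, χ' = Ψ - f := ⟨_, rfl⟩
  have hχap : ∀ ξ : X, χ ξ = Ψ ξ - f ξ := fun ξ => by rw [hχdef]; rfl
  have hχy : Ψ μ + 1 - 2*δ k < χ y := by
    rw [hχap]
    linarith
  have hχyle : χ y ≤ ‖χ‖ := by
    have h := χ.le_opNorm y
    rw [Real.norm_eq_abs] at h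
    have h2 : |χ y| ≤ ‖χ‖ := le_trans h (by nlinarith [norm_nonneg χ])
    exact le_trans (le_abs_self _) h2
  have hc_lt : Ψ μ + 1 - 3*δ k < ‖χ‖ := by
    have := hδ0 k
    linarith
  have hc0 : 0 ≤ Ψ μ + 1 - 3*δ k := by
    have h1 := hδρ k
    linarith [hΨμ_lb2, hρ4, hl4]
  obtain ⟨m, hMolm, hm1, hmolc⟩ := hMol χ _ hc0 hc_lt
  have hχm : χ m = l * φ m + (∑ i : Fin k, fs i m) - f m := by
    rw [hχap, hΨap]
  have hφm_abs : |φ m| ≤ 1 := by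
    have h := φ.le_opNorm m
    rw [Real.norm_eq_abs, hφ, one_mul] at h
    exact le_trans h hm1
  have hfm_abs : |f m| ≤ 1 := by
    have h := f.le_opNorm m
    rw [Real.norm_eq_abs, hf1, one_mul] at h
    exact le_trans h hm1
  have hgim_abs : ∀ i : Fin k, |fs i m| ≤ 1 := by
    intro i
    have h := (fs i).le_opNorm m
    rw [Real.norm_eq_abs, hfs1 i, one_mul] at h
    exact le_trans h hm1
  have hsum_ub : (∑ i : Fin k, fs i m) ≤ (k:ℝ) := by
    calc (∑ i : Fin k, fs i m) ≤ ∑ _i : Fin k, (1:ℝ) :=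
          Finset.sum_le_sum (fun i _ => le_trans (le_abs_self _) (hgim_abs i))
      _ = (k:ℝ) := by simp
  have hlφm_ub : l * φ m ≤ l := by
    nlinarith [le_trans (le_abs_self _) hφm_abs]
  have hfm_lb : -1 ≤ f m := neg_le_of_abs_le hfm_abs
  have hSd3 : Sd + 3 * δ k < ρ := by
    have h2 := hδρ k
    have h3 := hδ0 k
    linarith
  refine ⟨f, m, hMolm, hf1, hfμ, ?_, ?_, ?_⟩
  -- the molecule lies in the slice of φ
  · have h5 : (Ψ μ + 1 - 3*δ k) - (k:ℝ) - 1 < l * φ m := by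
      linarith [hmolc, hχm, hsum_ub, hfm_lb]
    have h6 : l * φ μ - ρ < l * φ m := by
      linarith [hΨμ_lb, hSd3]
    have h7 : l * (φ μ - (φ μ - (1 - α))) < l * φ m := by nlinarith
    have h8 : φ μ - (φ μ - (1 - α)) < φ m := (mul_lt_mul_iff_right₀ hl0).mp h7
    linarith
  -- the molecule is nearly normed by the previous functionals
  · intro j
    have hksucc : 1 ≤ k := Nat.one_le_iff_ne_zero.mpr
      (by rintro rfl; exact absurd j.2 (Nat.not_lt_zero _))
    have hsplitsum : ∑ i : Fin k, fs i m
        = fs j m + ∑ i ∈ Finset.univ.erase j, fs i m :=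
      (Finset.add_sum_erase _ _ (Finset.mem_univ j)).symm
    have herase_ub : ∑ i ∈ Finset.univ.erase j, fs i m ≤ (k:ℝ) - 1 := by
      have h1 : ∑ i ∈ Finset.univ.erase j, fs i m
          ≤ ∑ _i ∈ Finset.univ.erase j, (1:ℝ) :=
        Finset.sum_le_sum (fun i _ => le_trans (le_abs_self _) (hgim_abs i))
      have h2 : ∑ _i ∈ Finset.univ.erase j, (1:ℝ) = ((k:ℝ) - 1) := by
        rw [Finset.sum_const, Finset.card_erase_of_mem (Finset.mem_univ j)]
        simp only [Finset.card_univ, Fintype.card_fin, nsmul_eq_mul, mul_one]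
        rw [Nat.cast_sub hksucc]
        norm_num
      linarith
    have h5 : (Ψ μ + 1 - 3*δ k) - l - ((k:ℝ) - 1) - 1 < fs j m := by
      rw [hsplitsum] at hχm
      linarith [hmolc, herase_ub, hlφm_ub, hfm_lb]
    have hll : l * (1 - φ μ) = l - l * φ μ := by ring
    linarith [hΨμ_lb, hSd3, hη]
  -- and f norms its negative
  · have h5 : (Ψ μ + 1 - 3*δ k) - l - (k:ℝ) < -(f m) := by
      linarith [hmolc, hχm, hsum_ub, hlφm_ub]
    have hll : l * (1 - φ μ) = l - l * φ μ := by ring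
    linarith [hΨμ_lb, hSd3, hη]

/-- The main construction, abstractly. -/
theorem abstract_main (μ : X) (hμ : ‖μ‖ = 1) (hΔ : IsDeltaPoint μ)
    (Mol : X → Prop)
    (hMol : ∀ (ψ : Dual ℝ X) (c : ℝ), 0 ≤ c → c < ‖ψ‖ → ∃ m, Mol m ∧ ‖m‖ ≤ 1 ∧ c < ψ m) :
    ∀ ε > (0:ℝ), ∀ (φ : Dual ℝ X) (α : ℝ), ‖φ‖ = 1 → 0 < α → 1 - α < φ μ →
      ∃ m : ℕ → X, (∀ i, Mol (m i)) ∧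
        (∀ i, 1 - α < φ (m i)) ∧
        (∀ i j, i ≠ j → 2 - ε ≤ ‖m i - m j‖) := by
  intro ε hε φ α hφ hα hsl
  classical
  have hφμ_abs : |φ μ| ≤ 1 := by
    have h := φ.le_opNorm μ
    rwa [Real.norm_eq_abs, hφ, hμ, one_mul] at h
  have hφμ_le : φ μ ≤ 1 := le_trans (le_abs_self _) hφμ_abs
  have hφμ_ge : -1 ≤ φ μ := neg_le_of_abs_le hφμ_abs
  -- constants
  set L : ℝ := 1 - φ μ with hLdef
  have hL0 : 0 ≤ L := by simp only [hLdef]; linarith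
  have hβ0 : 0 < φ μ - (1 - α) := by linarith
  set l : ℝ := min (1/4) (ε/(8*(L+1))) with hldef
  have hl0 : 0 < l := lt_min (by norm_num) (by positivity)
  have hl4 : l ≤ 1/4 := min_le_left _ _
  have hlL : l * L ≤ ε/8 := by
    have h1 : l * L ≤ (ε/(8*(L+1))) * L :=
      mul_le_mul_of_nonneg_right (min_le_right _ _) hL0
    have h2 : (ε/(8*(L+1))) * L ≤ ε/8 := by
      rw [div_mul_eq_mul_div, div_le_div_iff₀ (by positivity) (by norm_num)]
      nlinarith
    linarith
  set ρ : ℝ := min (1/4) (min (ε/8) (l*(φ μ - (1 - α)))) with hρdef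
  have hρ0 : 0 < ρ := lt_min (by norm_num) (lt_min (by positivity) (by positivity))
  have hρ4 : ρ ≤ 1/4 := min_le_left _ _
  have hρε : ρ ≤ ε/8 := le_trans (min_le_right _ _) (min_le_left _ _)
  have hρβ : ρ ≤ l*(φ μ - (1 - α)) := le_trans (min_le_right _ _) (min_le_right _ _)
  set η : ℝ := l*L + ρ with hηdef
  have hη4 : η ≤ ε/4 := by simp only [hηdef]; linarith
  have hη : l * (1 - φ μ) + ρ ≤ η := le_of_eq (by rw [hηdef, hLdef])
  set δ : ℕ → ℝ := fun k => ρ / (3 * 2^(k+1)) with hδdef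
  have hδ0 : ∀ k, 0 < δ k := fun k => by simp only [hδdef]; positivity
  have hδρ : ∀ k, 3 * δ k ≤ ρ / 2 := by
    intro k
    simp only [hδdef]
    rw [mul_div_assoc', div_le_div_iff₀ (by positivity) (by norm_num)]
    have h2 : (2:ℝ) ≤ 2^(k+1) := by
      calc (2:ℝ) = 2^1 := by norm_num
        _ ≤ 2^(k+1) := by
            apply pow_le_pow_right₀ (by norm_num)
            omega
    nlinarith [hρ0.le]
  have hδsum : ∀ k, (∑ i ∈ Finset.range k, δ i) ≤ ρ/3 := by
    intro k
    have h1 : (∑ i ∈ Finset.range k, δ i) = (ρ/3) * ∑ i ∈ Finset.range k, ((2:ℝ)^(i+1))⁻¹ := by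
      rw [Finset.mul_sum]
      refine Finset.sum_congr rfl (fun i _ => ?_)
      simp only [hδdef]
      rw [← div_div, div_eq_mul_inv]
    rw [h1]
    have h2 : (∑ i ∈ Finset.range k, ((2:ℝ)^(i+1))⁻¹) ≤ 1 := by
      have h3 := geom_tail_le k
      have h4 : (0:ℝ) ≤ ((2:ℝ)^k)⁻¹ := by positivity
      linarith
    nlinarith [hρ0.le]
  -- the inductive invariant
  have hT : Nonempty (Dual ℝ X × X) := ⟨⟨0, 0⟩⟩
  obtain ⟨g, hg⟩ := seq_exists
    (T := Dual ℝ X × X)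
    (fun k hist x =>
      Mol x.2 ∧ ‖x.1‖ = 1 ∧ 1 - δ k ≤ x.1 μ ∧ 1 - α < φ x.2 ∧
      (∀ i : Fin k, 1 - η ≤ (hist i).1 x.2) ∧ x.1 x.2 ≤ -(1 - η))
    (by
      intro g k hg
      obtain ⟨f, m, h1, h2, h3, h4, h5, h6⟩ := abstract_step μ hμ hΔ Mol hMol φ hφ α
        l ρ η δ hl0 hl4 hρ0 hρ4 hρβ hφμ_le hφμ_ge hη hδ0 hδρ hδsum k
        (fun i => (g i).1) (fun i => (hg i i.2).2.1) (fun i => (hg i i.2).2.2.1)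
      exact ⟨(f, m), h1, h2, h3, h4, h5, h6⟩)
  refine ⟨fun i => (g i).2, fun i => (hg i).1, fun i => (hg i).2.2.2.1, ?_⟩
  have key : ∀ i j : ℕ, i < j → 2 - ε ≤ ‖(g i).2 - (g j).2‖ := by
    intro i j hij
    have hf1 : ‖(g i).1‖ = 1 := (hg i).2.1
    have hfmj : 1 - η ≤ (g i).1 (g j).2 := (hg j).2.2.2.2.1 ⟨i, hij⟩
    have hfmi : (g i).1 (g i).2 ≤ -(1 - η) := (hg i).2.2.2.2.2
    have hfd : (g i).1 (g j).2 - (g i).1 (g i).2 ≤ ‖(g i).2 - (g j).2‖ := by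
      have h1 := (g i).1.le_opNorm ((g j).2 - (g i).2)
      rw [Real.norm_eq_abs, hf1, one_mul, ContinuousLinearMap.map_sub] at h1
      calc (g i).1 (g j).2 - (g i).1 (g i).2 ≤ |(g i).1 (g j).2 - (g i).1 (g i).2| :=
            le_abs_self _
        _ ≤ ‖(g j).2 - (g i).2‖ := h1
        _ = ‖(g i).2 - (g j).2‖ := norm_sub_rev _ _
    linarith [hη4]
  intro i j hij
  rcases lt_or_gt_of_ne hij with h | h
  · exact key i j h
  · rw [norm_sub_rev]
    exact key j i h

end Abstract

/-- Proposition 3.1. If `μ ∈ S_{F(M)}` is a Δ-point, then every slice of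
`B_{F(M)}` containing `μ` contains, for every `ε > 0`, a sequence of molecules that are
pairwise at distance at least `2 - ε` from each other. -/
theorem statement6 {M : Type*} [MetricSpace M] (z : M)
    (μ : ↥(FreeSpace M z)) (hμ : ‖μ‖ = 1) (hΔ : IsDeltaPoint μ) :
    ∀ ε > (0:ℝ), ∀ (φ : Dual ℝ ↥(FreeSpace M z)) (α : ℝ), ‖φ‖ = 1 → 0 < α → 1 - α < φ μ →
      ∃ u v : ℕ → M, (∀ i, u i ≠ v i) ∧
        (∀ i, ‖mol M z (u i) (v i)‖ ≤ 1 ∧ 1 - α < φ (mol M z (u i) (v i))) ∧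
        (∀ i j, i ≠ j → 2 - ε ≤ ‖mol M z (u i) (v i) - mol M z (u j) (v j)‖) := by
  intro ε hε φ α hφ hα hsl
  classical
  have hMol : ∀ (ψ : Dual ℝ ↥(FreeSpace M z)) (c : ℝ), 0 ≤ c → c < ‖ψ‖ →
      ∃ m, (∃ a b : M, a ≠ b ∧ m = mol M z a b) ∧ ‖m‖ ≤ 1 ∧ c < ψ m := by
    intro ψ c hc0 hc
    obtain ⟨a, b, hab, h⟩ := exists_molecule ψ hc0 hc
    exact ⟨mol M z a b, ⟨a, b, hab, rfl⟩, mol_norm_le a b, h⟩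
  obtain ⟨m, hMolseq, hslice, hsep⟩ := abstract_main μ hμ hΔ
    (fun ν => ∃ a b : M, a ≠ b ∧ ν = mol M z a b) hMol ε hε φ α hφ hα hsl
  choose u v huv hmeq using hMolseq
  refine ⟨u, v, huv, fun i => ⟨mol_norm_le _ _, ?_⟩, fun i j hij => ?_⟩
  · rw [← hmeq i]
    exact hslice i
  · rw [← hmeq i, ← hmeq j]
    exact hsep i j hij
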